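/- Let 𝓡 be a self-adjoint endomorphism of Λ²V. For a ∈ Λ²V let R_a be the skew-adjoint endomorphism of V defined by ⟨R_aZ, T⟩ = ⟨𝓡(a), Z∧T⟩ for Z,T ∈ V, and let D_a be the endomorphism of Λ²V acting as a derivation, D_a(Z∧T) = (R_aZ)∧T + Z∧(R_aT). Then for every a ∈ Λ²V and all b, c ∈ Λ²₊V one has ⟨D_a(b), c⟩ = ⟨𝓡(b×c), a⟩ (identity (4) of the paper). -/

import Mathlib

open scoped RealInnerProductSpace

set_option maxHeartbeats 4000000 in
/-- Let `V` be a 4-dimensional oriented real inner product space, `⋆` the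
Hodge star on `Λ²V`, `Λ²₊V` its `(+1)`-eigenspace with the cross product `×`.
Let `𝓡` be a self-adjoint endomorphism of `Λ²V`.  For `a ∈ Λ²V` let `R_a` be the
endomorphism of `V` with `⟨R_aZ, T⟩ = ⟨𝓡(a), Z∧T⟩`, and let `D_a` be the endomorphism of
`Λ²V` acting as a derivation: `D_a(Z∧T) = (R_aZ)∧T + Z∧(R_aT)`.  Then for every `a ∈ Λ²V`
and all `b, c ∈ Λ²₊V` one has `⟨D_a(b), c⟩ = ⟨𝓡(b×c), a⟩`. -/
theorem stmt_5 {V L : Type*}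
    [NormedAddCommGroup V] [InnerProductSpace ℝ V]
    [NormedAddCommGroup L] [InnerProductSpace ℝ L]
    (h4 : Module.finrank ℝ V = 4)
    (o : Orientation ℝ V (Fin 4))
    (wedge : V →ₗ[ℝ] V →ₗ[ℝ] L)
    (wedge_self : ∀ v : V, wedge v v = 0)
    (wedge_span : Submodule.span ℝ {x : L | ∃ u v : V, wedge u v = x} = ⊤)
    (inner_wedge : ∀ v₁ v₂ v₃ v₄ : V,
      ⟪wedge v₁ v₂, wedge v₃ v₄⟫ =
        (1 / 2) * (⟪v₁, v₃⟫ * ⟪v₂, v₄⟫ - ⟪v₁, v₄⟫ * ⟪v₂, v₃⟫))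
    (hodge : L →ₗ[ℝ] L)
    (hodge_hodge : ∀ x : L, hodge (hodge x) = x)
    (hodge_wedge : ∀ b : OrthonormalBasis (Fin 4) ℝ V, b.toBasis.orientation = o →
      hodge (wedge (b 0) (b 1)) = wedge (b 2) (b 3) ∧
      hodge (wedge (b 0) (b 2)) = wedge (b 3) (b 1) ∧
      hodge (wedge (b 0) (b 3)) = wedge (b 1) (b 2))
    (cross : L →ₗ[ℝ] L →ₗ[ℝ] L)
    (hcross_basis : ∀ b : OrthonormalBasis (Fin 4) ℝ V, b.toBasis.orientation = o →
      cross (wedge (b 0) (b 1) + wedge (b 2) (b 3)) (wedge (b 0) (b 2) + wedge (b 3) (b 1))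
          = wedge (b 0) (b 3) + wedge (b 1) (b 2) ∧
      cross (wedge (b 0) (b 2) + wedge (b 3) (b 1)) (wedge (b 0) (b 3) + wedge (b 1) (b 2))
          = wedge (b 0) (b 1) + wedge (b 2) (b 3) ∧
      cross (wedge (b 0) (b 3) + wedge (b 1) (b 2)) (wedge (b 0) (b 1) + wedge (b 2) (b 3))
          = wedge (b 0) (b 2) + wedge (b 3) (b 1))
    (hcross_antisymm : ∀ x y : L, hodge x = x → hodge y = y → cross x y = -cross y x)
    (calR : L →ₗ[ℝ] L)
    (hcalR_sa : ∀ x y : L, ⟪calR x, y⟫ = ⟪x, calR y⟫)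
    (R : L → V →ₗ[ℝ] V)
    (hR : ∀ (a : L) (Z T : V), ⟪R a Z, T⟫ = ⟪calR a, wedge Z T⟫)
    (D : L → L →ₗ[ℝ] L)
    (hD : ∀ (a : L) (Z T : V), D a (wedge Z T) = wedge (R a Z) T + wedge Z (R a T)) :
    ∀ (a b c : L), hodge b = b → hodge c = c →
      ⟪D a b, c⟫ = ⟪calR (cross b c), a⟫ := by
  intro a b c hb hc
  set bV := o.finOrthonormalBasis (by norm_num) h4 with hbVdef
  have hor : bV.toBasis.orientation = o := o.finOrthonormalBasis_orientation _ _
  have he : ∀ i j : Fin 4, ⟪bV i, bV j⟫ = if i = j then 1 else 0 :=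
    orthonormal_iff_ite.mp bV.orthonormal
  clear_value bV
  clear hbVdef
  -- antisymmetry of the wedge
  have wanti : ∀ u v : V, wedge v u = -wedge u v := by
    intro u v
    have h := wedge_self (u + v)
    simp only [map_add, LinearMap.add_apply, wedge_self, zero_add, add_zero] at h
    exact eq_neg_of_add_eq_zero_left h
  have w10 : wedge (bV 1) (bV 0) = -wedge (bV 0) (bV 1) := wanti _ _
  have w20 : wedge (bV 2) (bV 0) = -wedge (bV 0) (bV 2) := wanti _ _
  have w30 : wedge (bV 3) (bV 0) = -wedge (bV 0) (bV 3) := wanti _ _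
  have w21 : wedge (bV 2) (bV 1) = -wedge (bV 1) (bV 2) := wanti _ _
  have w31 : wedge (bV 3) (bV 1) = -wedge (bV 1) (bV 3) := wanti _ _
  have w32 : wedge (bV 3) (bV 2) = -wedge (bV 2) (bV 3) := wanti _ _
  -- vanishing criterion
  have hzero : ∀ x : L, (∀ u v : V, ⟪x, wedge u v⟫ = 0) → x = 0 := by
    intro x hx
    have h2 : ∀ y : L, ⟪x, y⟫ = 0 := by
      intro y
      have hy : y ∈ Submodule.span ℝ {z : L | ∃ u v : V, wedge u v = z} := by
        rw [wedge_span]; trivial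
      induction hy using Submodule.span_induction with
      | mem z hz => obtain ⟨u, v, rfl⟩ := hz; exact hx u v
      | zero => exact inner_zero_right x
      | add y z _ _ hy hz => rw [inner_add_right, hy, hz, add_zero]
      | smul t y _ hy => rw [real_inner_smul_right, hy, mul_zero]
    exact inner_self_eq_zero.mp (h2 x)
  have hgen : ∀ y : L, (∀ i j : Fin 4, ⟪y, wedge (bV i) (bV j)⟫ = 0) → y = 0 := by
    intro y hy
    apply hzero
    intro u v
    rw [← bV.sum_repr' u, ← bV.sum_repr' v]
    simp only [map_sum, map_smul, LinearMap.sum_apply, LinearMap.smul_apply, inner_sum,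
      real_inner_smul_right, hy, mul_zero, Finset.sum_const_zero]
  -- decomposition of an arbitrary element in the wedge basis
  have hdecomp : ∀ x : L, x =
      (2*⟪x, wedge (bV 0) (bV 1)⟫) • wedge (bV 0) (bV 1)
    + (2*⟪x, wedge (bV 0) (bV 2)⟫) • wedge (bV 0) (bV 2)
    + (2*⟪x, wedge (bV 0) (bV 3)⟫) • wedge (bV 0) (bV 3)
    + (2*⟪x, wedge (bV 1) (bV 2)⟫) • wedge (bV 1) (bV 2)
    + (2*⟪x, wedge (bV 1) (bV 3)⟫) • wedge (bV 1) (bV 3)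
    + (2*⟪x, wedge (bV 2) (bV 3)⟫) • wedge (bV 2) (bV 3) := by
    intro x
    rw [← sub_eq_zero]
    apply hgen
    intro i j
    fin_cases i <;> fin_cases j <;>
      · simp [inner_sub_left, inner_add_left, real_inner_smul_left, inner_wedge, he,
          wedge_self, w10, w20, w30, w21, w31, w32, -inner_self_eq_norm_sq_to_K]
        try ring
  -- hodge images of basis wedges
  obtain ⟨H1, H2, H3⟩ := hodge_wedge bV hor
  have H1' : hodge (wedge (bV 2) (bV 3)) = wedge (bV 0) (bV 1) := by rw [← H1, hodge_hodge]
  have H2' : hodge (wedge (bV 3) (bV 1)) = wedge (bV 0) (bV 2) := by rw [← H2, hodge_hodge]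
  have H2'' : hodge (wedge (bV 1) (bV 3)) = -wedge (bV 0) (bV 2) := by
    have h := H2'
    rw [w31, map_neg] at h
    exact neg_eq_iff_eq_neg.mp h
  have H3' : hodge (wedge (bV 1) (bV 2)) = wedge (bV 0) (bV 3) := by rw [← H3, hodge_hodge]
  set s1 : L := wedge (bV 0) (bV 1) + wedge (bV 2) (bV 3) with hs1def
  set s2 : L := wedge (bV 0) (bV 2) + wedge (bV 3) (bV 1) with hs2def
  set s3 : L := wedge (bV 0) (bV 3) + wedge (bV 1) (bV 2) with hs3def
  -- every self-dual element is a combination of s1, s2, s3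
  have hsd : ∀ x : L, hodge x = x → ∃ p q r : ℝ, x = p • s1 + q • s2 + r • s3 := by
    intro x hx
    refine ⟨⟪x, wedge (bV 0) (bV 1)⟫ + ⟪x, wedge (bV 2) (bV 3)⟫,
      ⟪x, wedge (bV 0) (bV 2)⟫ - ⟪x, wedge (bV 1) (bV 3)⟫,
      ⟪x, wedge (bV 0) (bV 3)⟫ + ⟪x, wedge (bV 1) (bV 2)⟫, ?_⟩
    have hd := hdecomp x
    set c01 := ⟪x, wedge (bV 0) (bV 1)⟫
    set c02 := ⟪x, wedge (bV 0) (bV 2)⟫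
    set c03 := ⟪x, wedge (bV 0) (bV 3)⟫
    set c12 := ⟪x, wedge (bV 1) (bV 2)⟫
    set c13 := ⟪x, wedge (bV 1) (bV 3)⟫
    set c23 := ⟪x, wedge (bV 2) (bV 3)⟫
    have key : (2:ℝ) • x =
        (2:ℝ) • ((c01 + c23) • s1 + (c02 - c13) • s2 + (c03 + c12) • s3) := by
      rw [two_smul]
      nth_rewrite 2 [← hx]
      nth_rewrite 1 [hd]
      nth_rewrite 1 [hd]
      rw [hs1def, hs2def, hs3def]
      simp only [map_add, map_smul, H1, H1', H2, H2'', H3, H3']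
      rw [w31]
      module
    exact smul_right_injective L two_ne_zero key
  -- self-duality of the s's
  have hs1d : hodge s1 = s1 := by rw [hs1def, map_add, H1, H1', add_comm]
  have hs2d : hodge s2 = s2 := by rw [hs2def, map_add, H2, H2', add_comm]
  have hs3d : hodge s3 = s3 := by rw [hs3def, map_add, H3, H3', add_comm]
  -- cross product values
  obtain ⟨C12, C23, C31⟩ := hcross_basis bV hor
  rw [← hs1def, ← hs2def, ← hs3def] at C12 C23 C31
  have C21 : cross s2 s1 = -s3 := by rw [hcross_antisymm s2 s1 hs2d hs1d, C12]
  have C32 : cross s3 s2 = -s1 := by rw [hcross_antisymm s3 s2 hs3d hs2d, C23]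
  have C13 : cross s1 s3 = -s2 := by rw [hcross_antisymm s1 s3 hs1d hs3d, C31]
  have hself : ∀ y : L, hodge y = y → cross y y = 0 := by
    intro y hy
    have h := hcross_antisymm y y hy hy
    have h2 : cross y y + cross y y = 0 := by nth_rewrite 2 [h]; simp
    have h3 : (2:ℝ) • cross y y = 0 := by rw [two_smul]; exact h2
    exact (smul_eq_zero.mp h3).resolve_left (by norm_num)
  have C11 : cross s1 s1 = 0 := hself s1 hs1d
  have C22 : cross s2 s2 = 0 := hself s2 hs2d
  have C33 : cross s3 s3 = 0 := hself s3 hs3d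
  have hRs : ∀ y : L, ⟪calR y, a⟫ = ⟪calR a, y⟫ := fun y => by
    rw [hcalR_sa]; exact real_inner_comm _ _
  -- the nine key identities
  have key11 : ⟪D a s1, s1⟫ = ⟪calR (cross s1 s1), a⟫ := by
    rw [C11, hs1def]
    simp [hD, map_add, inner_add_left, inner_add_right, inner_wedge, hR, he, wedge_self,
      w10, w20, w30, w21, w31, w32]
    try ring
  have key22 : ⟪D a s2, s2⟫ = ⟪calR (cross s2 s2), a⟫ := by
    rw [C22, hs2def]
    simp [hD, map_add, inner_add_left, inner_add_right, inner_wedge, hR, he, wedge_self,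
      w10, w20, w30, w21, w31, w32]
    try ring
  have key33 : ⟪D a s3, s3⟫ = ⟪calR (cross s3 s3), a⟫ := by
    rw [C33, hs3def]
    simp [hD, map_add, inner_add_left, inner_add_right, inner_wedge, hR, he, wedge_self,
      w10, w20, w30, w21, w31, w32]
    try ring
  have key12 : ⟪D a s1, s2⟫ = ⟪calR (cross s1 s2), a⟫ := by
    rw [C12, hRs, hs1def, hs2def, hs3def]
    simp [hD, map_add, inner_add_left, inner_add_right, inner_wedge, hR, he, wedge_self,
      w10, w20, w30, w21, w31, w32]
    try ring
  have key23 : ⟪D a s2, s3⟫ = ⟪calR (cross s2 s3), a⟫ := by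
    rw [C23, hRs, hs1def, hs2def, hs3def]
    simp [hD, map_add, inner_add_left, inner_add_right, inner_wedge, hR, he, wedge_self,
      w10, w20, w30, w21, w31, w32]
    try ring
  have key31 : ⟪D a s3, s1⟫ = ⟪calR (cross s3 s1), a⟫ := by
    rw [C31, hRs, hs1def, hs2def, hs3def]
    simp [hD, map_add, inner_add_left, inner_add_right, inner_wedge, hR, he, wedge_self,
      w10, w20, w30, w21, w31, w32]
    try ring
  have key21 : ⟪D a s2, s1⟫ = ⟪calR (cross s2 s1), a⟫ := by
    rw [C21, map_neg, inner_neg_left, hRs, hs1def, hs2def, hs3def]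
    simp [hD, map_add, inner_add_left, inner_add_right, inner_wedge, hR, he, wedge_self,
      w10, w20, w30, w21, w31, w32]
    try ring
  have key32 : ⟪D a s3, s2⟫ = ⟪calR (cross s3 s2), a⟫ := by
    rw [C32, map_neg, inner_neg_left, hRs, hs1def, hs2def, hs3def]
    simp [hD, map_add, inner_add_left, inner_add_right, inner_wedge, hR, he, wedge_self,
      w10, w20, w30, w21, w31, w32]
    try ring
  have key13 : ⟪D a s1, s3⟫ = ⟪calR (cross s1 s3), a⟫ := by
    rw [C13, map_neg, inner_neg_left, hRs, hs1def, hs2def, hs3def]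
    simp [hD, map_add, inner_add_left, inner_add_right, inner_wedge, hR, he, wedge_self,
      w10, w20, w30, w21, w31, w32]
    try ring
  -- assemble
  obtain ⟨p1, p2, p3, hbe⟩ := hsd b hb
  obtain ⟨q1, q2, q3, hce⟩ := hsd c hc
  rw [hbe, hce]
  simp only [map_add, map_smul, LinearMap.add_apply, LinearMap.smul_apply,
    inner_add_left, inner_add_right, real_inner_smul_left, real_inner_smul_right,
    smul_eq_mul]
  rw [key11, key12, key13, key21, key22, key23, key31, key32, key33]
  ring
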